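/- arXiv:2310.02858 — 4 statements merged into one kernel-verified Lean document; each statement's English description precedes it below -/
import Mathlib

section
/- Let a, b be real numbers with a > 0, b > 0 and a + b < 1, and define the cubic polynomial Q(x) = −a + a³ + 3ax − 3a²x − 3abx + 3a²bx + 3bx² − 3abx² − 3b²x² + 3ab²x² − bx³ + b³x³. Then Q has three distinct real roots, and exactly one of these roots is negative. -/
/-- The cubic polynomial `Q(x)` from the two-slit wedge computation, with
parameters `a`, `b` coming from the angles `θ₁ = aπ`, `θ₂ = (1-b)π`. -/
noncomputable def Q (a b x : ℝ) : ℝ :=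
  -a + a^3 + 3*a*x - 3*a^2*x - 3*a*b*x + 3*a^2*b*x + 3*b*x^2 - 3*a*b*x^2
    - 3*b^2*x^2 + 3*a*b^2*x^2 - b*x^3 + b^3*x^3

/-- Any root of a cubic with nonzero leading coefficient and three known
distinct roots equals one of them. -/
lemma cubic_three_roots (c3 c2 c1 c0 x1 x2 x3 x : ℝ) (h3 : c3 ≠ 0)
    (h12 : x1 ≠ x2) (h13 : x1 ≠ x3) (h23 : x2 ≠ x3)
    (e1 : c3*x1^3 + c2*x1^2 + c1*x1 + c0 = 0)
    (e2 : c3*x2^3 + c2*x2^2 + c1*x2 + c0 = 0)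
    (e3 : c3*x3^3 + c2*x3^2 + c1*x3 + c0 = 0)
    (ex : c3*x^3 + c2*x^2 + c1*x + c0 = 0) :
    x = x1 ∨ x = x2 ∨ x = x3 := by
  have key : (x - x1) * (c3*(x^2 + x*x1 + x1^2) + c2*(x + x1) + c1) = 0 := by
    linear_combination ex - e1
  rcases mul_eq_zero.1 key with h | hR
  · left; linarith [sub_eq_zero.1 h]
  have R2 : c3*(x2^2 + x2*x1 + x1^2) + c2*(x2 + x1) + c1 = 0 := by
    have k2 : (x2 - x1) * (c3*(x2^2 + x2*x1 + x1^2) + c2*(x2 + x1) + c1) = 0 := by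
      linear_combination e2 - e1
    rcases mul_eq_zero.1 k2 with h | h
    · exact absurd (by linarith [sub_eq_zero.1 h]) h12.symm
    · exact h
  have R3 : c3*(x3^2 + x3*x1 + x1^2) + c2*(x3 + x1) + c1 = 0 := by
    have k3 : (x3 - x1) * (c3*(x3^2 + x3*x1 + x1^2) + c2*(x3 + x1) + c1) = 0 := by
      linear_combination e3 - e1
    rcases mul_eq_zero.1 k3 with h | h
    · exact absurd (by linarith [sub_eq_zero.1 h]) h13.symm
    · exact h
  have key2 : (x - x2) * (c3*(x + x2 + x1) + c2) = 0 := by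
    linear_combination hR - R2
  rcases mul_eq_zero.1 key2 with h | hS
  · right; left; linarith [sub_eq_zero.1 h]
  have S3 : c3*(x3 + x2 + x1) + c2 = 0 := by
    have k4 : (x3 - x2) * (c3*(x3 + x2 + x1) + c2) = 0 := by
      linear_combination R3 - R2
    rcases mul_eq_zero.1 k4 with h | h
    · exact absurd (by linarith [sub_eq_zero.1 h]) h23.symm
    · exact h
  right; right
  have : c3 * (x - x3) = 0 := by linear_combination hS - S3
  rcases mul_eq_zero.1 this with h | h
  · exact absurd h h3
  · linarith [sub_eq_zero.1 h]

/-- For `a, b > 0` with `a + b < 1`, the cubic `Q` has three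
distinct real roots, and exactly one of these roots is negative. -/
theorem stmt1 (a b : ℝ) (ha : 0 < a) (hb : 0 < b) (hab : a + b < 1) :
    (∃ x₁ x₂ x₃ : ℝ, x₁ ≠ x₂ ∧ x₁ ≠ x₃ ∧ x₂ ≠ x₃ ∧
      Q a b x₁ = 0 ∧ Q a b x₂ = 0 ∧ Q a b x₃ = 0 ∧
      ∀ x : ℝ, Q a b x = 0 → x = x₁ ∨ x = x₂ ∨ x = x₃) ∧
    (∃! x : ℝ, Q a b x = 0 ∧ x < 0) := by
  have ha1 : a < 1 := by linarith
  have hb1 : b < 1 := by linarith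
  -- leading coefficient data
  have hd : 0 < b * (1 - b) * (1 + b) :=
    mul_pos (mul_pos hb (by linarith)) (by linarith)
  set M : ℝ := 9 / (b * (1 - b) * (1 + b)) with hMdef
  have hdle : b * (1 - b) * (1 + b) ≤ 1 := by
    nlinarith [mul_nonneg (mul_nonneg hb.le hb.le) hb.le]
  have hM9 : 9 ≤ M := by
    rw [hMdef, le_div_iff₀ hd]; nlinarith
  have hMd : b * (1 - b) * (1 + b) * M = 9 := by
    rw [hMdef]; field_simp; exact div_self (sub_pos.mpr hb1).ne'
  -- sign evaluations
  have hQ0 : Q a b 0 < 0 := by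
    have : Q a b 0 = -(a * (1 - a) * (1 + a)) := by unfold Q; ring
    rw [this]
    have : 0 < a * (1 - a) * (1 + a) :=
      mul_pos (mul_pos ha (by linarith)) (by linarith)
    linarith
  have hQ1 : 0 < Q a b 1 := by
    have h : Q a b 1 = (a + b) * (1 - (a + b)) * (2 - (a + b)) := by unfold Q; ring
    rw [h]
    have h1 : 0 < a + b := by linarith
    have h2 : 0 < 1 - (a + b) := by linarith
    have h3 : 0 < 2 - (a + b) := by linarith
    positivity
  have hQM : Q a b M < 0 := by
    have h : Q a b M = M^2 * (3*b*(1-a)*(1-b)) - 9*M^2 + 3*a*(1-a)*(1-b)*M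
        - a*(1-a)*(1+a) := by
      unfold Q; linear_combination (-M^2) * hMd
    rw [h]
    have hc : 3*b*(1-a)*(1-b) ≤ 3 := by
      nlinarith [mul_nonneg (mul_nonneg ha.le hb.le) (by linarith : (0:ℝ) ≤ 1-b),
        sq_nonneg b]
    have h2 : 3*a*(1-a)*(1-b) ≤ 3 := by
      nlinarith [mul_nonneg (mul_nonneg ha.le ha.le) (by linarith : (0:ℝ) ≤ 1-b),
        mul_nonneg ha.le hb.le]
    have hcon : 0 < a*(1-a)*(1+a) :=
      mul_pos (mul_pos ha (by linarith)) (by linarith)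
    have hMpos : (0:ℝ) < M := by linarith
    have hM2 : 9*M ≤ M^2 := by nlinarith
    have k1 : M^2 * (3*b*(1-a)*(1-b)) ≤ M^2 * 3 :=
      mul_le_mul_of_nonneg_left hc (sq_nonneg M)
    have k2 : 3*a*(1-a)*(1-b)*M ≤ 3*M :=
      mul_le_mul_of_nonneg_right h2 hMpos.le
    nlinarith
  have hQnegM : 0 < Q a b (-M) := by
    have h : Q a b (-M) = 9*M^2 + M^2 * (3*b*(1-a)*(1-b)) - 3*a*(1-a)*(1-b)*M
        - a*(1-a)*(1+a) := by
      unfold Q; linear_combination (M^2) * hMd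
    rw [h]
    have hMpos : (0:ℝ) < M := by linarith
    have hM2 : 9*M ≤ M^2 := by nlinarith
    have hc : 0 ≤ M^2 * (3*b*(1-a)*(1-b)) := by
      have : (0:ℝ) ≤ 3*b*(1-a)*(1-b) := by
        have := mul_nonneg (mul_nonneg hb.le (by linarith : (0:ℝ) ≤ 1-a))
          (by linarith : (0:ℝ) ≤ 1-b)
        linarith [this]
      exact mul_nonneg (sq_nonneg M) this
    have hco : 3*a*(1-a)*(1-b) ≤ 3 := by
      nlinarith [mul_nonneg (mul_nonneg ha.le ha.le) (by linarith : (0:ℝ) ≤ 1-b),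
        mul_nonneg ha.le hb.le]
    have h2 : 3*a*(1-a)*(1-b)*M ≤ 3*M := mul_le_mul_of_nonneg_right hco hMpos.le
    have hcon : a*(1-a)*(1+a) ≤ 2 := by nlinarith [pow_nonneg ha.le 3]
    nlinarith
  -- continuity
  have hcont : Continuous (Q a b) := by unfold Q; fun_prop
  -- three roots via IVT
  obtain ⟨x₁, hx₁mem, hx₁⟩ := intermediate_value_Ioo' (by linarith : -M ≤ 0)
    hcont.continuousOn ⟨hQ0, hQnegM⟩
  obtain ⟨x₂, hx₂mem, hx₂⟩ := intermediate_value_Ioo (by norm_num : (0:ℝ) ≤ 1)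
    hcont.continuousOn ⟨hQ0, hQ1⟩
  obtain ⟨x₃, hx₃mem, hx₃⟩ := intermediate_value_Ioo' (by linarith : (1:ℝ) ≤ M)
    hcont.continuousOn ⟨hQM, hQ1⟩
  obtain ⟨hx₁l, hx₁r⟩ := hx₁mem
  obtain ⟨hx₂l, hx₂r⟩ := hx₂mem
  obtain ⟨hx₃l, hx₃r⟩ := hx₃mem
  have h12 : x₁ ≠ x₂ := by intro h; rw [h] at hx₁r; linarith
  have h13 : x₁ ≠ x₃ := by intro h; rw [h] at hx₁r; linarith
  have h23 : x₂ ≠ x₃ := by intro h; rw [h] at hx₂r; linarith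
  have h3ne : (b^3 - b : ℝ) ≠ 0 := by
    have : b^3 - b < 0 := by nlinarith [mul_pos (mul_pos hb (by linarith : (0:ℝ) < 1-b)) (by linarith : (0:ℝ) < 1+b)]
    exact this.ne
  have hform : ∀ x : ℝ, Q a b x =
      (b^3 - b)*x^3 + (3*b - 3*a*b - 3*b^2 + 3*a*b^2)*x^2
        + (3*a - 3*a^2 - 3*a*b + 3*a^2*b)*x + (-a + a^3) := by
    intro x; unfold Q; ring
  have hall : ∀ x : ℝ, Q a b x = 0 → x = x₁ ∨ x = x₂ ∨ x = x₃ := by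
    intro x hx
    refine cubic_three_roots (b^3 - b) (3*b - 3*a*b - 3*b^2 + 3*a*b^2)
      (3*a - 3*a^2 - 3*a*b + 3*a^2*b) (-a + a^3) x₁ x₂ x₃ x h3ne h12 h13 h23
      ?_ ?_ ?_ ?_
    · rw [← hform]; exact hx₁
    · rw [← hform]; exact hx₂
    · rw [← hform]; exact hx₃
    · rw [← hform]; exact hx
  refine ⟨⟨x₁, x₂, x₃, h12, h13, h23, hx₁, hx₂, hx₃, hall⟩, x₁, ⟨hx₁, hx₁r⟩, ?_⟩
  rintro y ⟨hy, hyneg⟩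
  rcases hall y hy with h | h | h
  · exact h
  · rw [h] at hyneg; linarith
  · rw [h] at hyneg; linarith
end

section
/- Let α > 0, N ≥ 2, and let X(t) = (x₁(t), …, x_N(t)) be a solution on [t₀, T) of the Coulomb repulsion system dx_j/dt = Σ_{i ≠ j} α/(x_j(t) − x_i(t)) for t ∈ (t₀, T), with each x_j continuous on [t₀, T), x₁(t) ≤ ⋯ ≤ x_N(t) for all t, the coordinates pairwise distinct for t > t₀, and such that at time t₀ there is exactly one index k with x_k(t₀) = x_{k+1}(t₀) while all other initial values are pairwise distinct and distinct from x_k(t₀). Then lim_{t ↓ t₀} (x_k(t) − x_k(t₀))/√(t − t₀) = −√α and lim_{t ↓ t₀} (x_{k+1}(t) − x_{k+1}(t₀))/√(t − t₀) = +√α. -/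
open Set Filter


lemma aux_u (α : ℝ) (hα : 0 < α) (t₀ T δ₁ M : ℝ) (u R : ℝ → ℝ)
    (hδ : t₀ < δ₁) (hδT : ∀ t ∈ Set.Ico t₀ δ₁, t < T) (hM : 0 ≤ M)
    (hucont : ContinuousOn u (Set.Ico t₀ T))
    (hu0 : u t₀ = 0)
    (hunn : ∀ t ∈ Set.Ico t₀ T, 0 ≤ u t)
    (hupos : ∀ t ∈ Set.Ioo t₀ T, 0 < u t)
    (hu' : ∀ t ∈ Set.Ioo t₀ T, HasDerivAt u (2 * α / u t + R t) t)
    (hR : ∀ t ∈ Set.Ico t₀ δ₁, |R t| ≤ M) :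
    Tendsto (fun t => u t / Real.sqrt (t - t₀)) (nhdsWithin t₀ (Set.Ioi t₀))
      (nhds (2 * Real.sqrt α)) := by
  have hT : t₀ < T := hδT t₀ ⟨le_rfl, hδ⟩
  -- MVT step
  have hmvt : ∀ t ∈ Set.Ioo t₀ δ₁, ∃ ξ ∈ Set.Ioo t₀ t,
      (u t) ^ 2 / (t - t₀) = 4 * α + 2 * u ξ * R ξ := by
    intro t ht
    have htT : t < T := hδT t ⟨ht.1.le, ht.2⟩
    have hsub : Set.Icc t₀ t ⊆ Set.Ico t₀ T := fun ξ hξ => ⟨hξ.1, lt_of_le_of_lt hξ.2 htT⟩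
    have hgc : ContinuousOn (fun τ => (u τ) ^ 2) (Set.Icc t₀ t) := (hucont.mono hsub).pow 2
    have hgd : ∀ ξ ∈ Set.Ioo t₀ t, HasDerivAt (fun τ => (u τ) ^ 2)
        (4 * α + 2 * u ξ * R ξ) ξ := by
      intro ξ hξ
      have hξT : ξ ∈ Set.Ioo t₀ T := ⟨hξ.1, lt_trans hξ.2 htT⟩
      have h1 : HasDerivAt (fun τ => (u τ) ^ 2)
          ((2 : ℕ) * u ξ ^ (2 - 1) * (2 * α / u ξ + R ξ)) ξ := (hu' ξ hξT).fun_pow 2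
      convert h1 using 1
      have huξ := (hupos ξ hξT).ne'
      field_simp
      ring
    obtain ⟨ξ, hξ, heq⟩ := exists_hasDerivAt_eq_slope (fun τ => (u τ) ^ 2) _ ht.1 hgc hgd
    refine ⟨ξ, hξ, ?_⟩
    rw [hu0] at heq
    norm_num at heq
    exact heq.symm
  have hg : Tendsto (fun t => (u t) ^ 2 / (t - t₀)) (nhdsWithin t₀ (Set.Ioi t₀))
      (nhds (4 * α)) := by
    rw [Metric.tendsto_nhdsWithin_nhds]
    intro ε hε
    set ν := ε / (2 * (M + 1)) with hν
    have hν0 : 0 < ν := by positivity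
    have hcw : ContinuousWithinAt u (Set.Ico t₀ T) t₀ := hucont t₀ ⟨le_rfl, hT⟩
    have h1 : ∀ᶠ t in nhdsWithin t₀ (Set.Ico t₀ T), u t < ν := by
      have h := hcw.tendsto
      rw [hu0] at h
      exact (Metric.tendsto_nhds.mp h ν hν0).mono (fun t ht => by
        rw [Real.dist_eq, sub_zero] at ht
        exact lt_of_le_of_lt (le_abs_self _) ht)
    have h2 : ∀ᶠ t in nhdsWithin t₀ (Set.Ico t₀ T), t < δ₁ :=
      mem_nhdsWithin_of_mem_nhds (Iio_mem_nhds hδ)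
    have h3 := h1.and h2
    rw [nhdsWithin_Ico_eq_nhdsGE hT] at h3
    obtain ⟨δ₂, hδ₂, hsub2⟩ := mem_nhdsGE_iff_exists_Ico_subset.mp h3
    refine ⟨δ₂ - t₀, sub_pos.mpr hδ₂, ?_⟩
    intro t ht hdist
    rw [Real.dist_eq] at hdist
    have ht1 : t₀ < t := ht
    have ht2 : t < δ₂ := by
      have := le_abs_self (t - t₀); linarith
    obtain ⟨hν', hδ₁'⟩ := hsub2 ⟨ht1.le, ht2⟩
    obtain ⟨ξ, hξ, heq⟩ := hmvt t ⟨ht1, hδ₁'⟩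
    rw [Real.dist_eq, heq]
    have hξI : ξ ∈ Set.Ico t₀ δ₁ := ⟨hξ.1.le, lt_trans hξ.2 hδ₁'⟩
    have hRξ := hR ξ hξI
    have huξnn : 0 ≤ u ξ := hunn ξ ⟨hξI.1, hδT ξ hξI⟩
    have huξ : u ξ < ν := (hsub2 ⟨hξI.1, lt_trans hξ.2 ht2⟩).1
    have habs : |4 * α + 2 * u ξ * R ξ - 4 * α| = 2 * u ξ * |R ξ| := by
      rw [show 4 * α + 2 * u ξ * R ξ - 4 * α = 2 * u ξ * R ξ by ring, abs_mul,
        abs_of_nonneg (by linarith : (0:ℝ) ≤ 2 * u ξ)]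
    rw [habs]
    have h5 : 2 * u ξ * |R ξ| ≤ 2 * ν * M :=
      mul_le_mul (by linarith) hRξ (abs_nonneg _) (by linarith)
    have h6 : 2 * ν * M < ε := by
      rw [hν]
      have heq2 : 2 * (ε / (2 * (M + 1))) * M = ε * M / (M + 1) := by
        field_simp
      rw [heq2, div_lt_iff₀ (by linarith)]
      nlinarith
    linarith
  have h6 := hg.sqrt
  have h7 : Real.sqrt (4 * α) = 2 * Real.sqrt α := by
    rw [show (4:ℝ) * α = 2 ^ 2 * α by ring, Real.sqrt_mul (by positivity),
      Real.sqrt_sq (by norm_num : (0:ℝ) ≤ 2)]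
  rw [h7] at h6
  apply h6.congr'
  filter_upwards [Ioo_mem_nhdsGT_of_mem (⟨le_rfl, hT⟩ : t₀ ∈ Set.Ico t₀ T)] with t ht
  rw [Real.sqrt_div (sq_nonneg _), Real.sqrt_sq (hunn t (Set.Ioo_subset_Ico_self ht))]

lemma aux_s (t₀ T δ₁ M : ℝ) (s B : ℝ → ℝ)
    (hδ : t₀ < δ₁) (hδT : ∀ t ∈ Set.Ico t₀ δ₁, t < T) (hM : 0 ≤ M)
    (hscont : ContinuousOn s (Set.Ico t₀ T))
    (hs' : ∀ t ∈ Set.Ioo t₀ T, HasDerivAt s (B t) t)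
    (hB : ∀ t ∈ Set.Ico t₀ δ₁, |B t| ≤ M) :
    Tendsto (fun t => (s t - s t₀) / Real.sqrt (t - t₀)) (nhdsWithin t₀ (Set.Ioi t₀))
      (nhds 0) := by
  have hT : t₀ < T := hδT t₀ ⟨le_rfl, hδ⟩
  have hbound : ∀ t ∈ Set.Ioo t₀ δ₁, |s t - s t₀| ≤ M * (t - t₀) := by
    intro t ht
    have htT : t < T := hδT t ⟨ht.1.le, ht.2⟩
    obtain ⟨ξ, hξ, heq⟩ := exists_hasDerivAt_eq_slope s B ht.1
      (hscont.mono (fun τ hτ => ⟨hτ.1, lt_of_le_of_lt hτ.2 htT⟩))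
      (fun ξ hξ => hs' ξ ⟨hξ.1, hξ.2.trans htT⟩)
    have hBξ := hB ξ ⟨hξ.1.le, hξ.2.trans ht.2⟩
    have h0 : (0:ℝ) < t - t₀ := sub_pos.mpr ht.1
    have h1 : s t - s t₀ = B ξ * (t - t₀) := by
      rw [heq]; field_simp
    rw [h1, abs_mul, abs_of_pos h0]
    exact mul_le_mul_of_nonneg_right hBξ h0.le
  apply squeeze_zero_norm' (a := fun t => M * Real.sqrt (t - t₀))
  · filter_upwards [Ioo_mem_nhdsGT_of_mem (⟨le_rfl, hδ⟩ : t₀ ∈ Set.Ico t₀ δ₁)] with t ht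
    have h0 : (0:ℝ) < t - t₀ := sub_pos.mpr ht.1
    have hb := hbound t ht
    rw [Real.norm_eq_abs, abs_div, abs_of_pos (Real.sqrt_pos.mpr h0)]
    calc |s t - s t₀| / Real.sqrt (t - t₀) ≤ M * (t - t₀) / Real.sqrt (t - t₀) := by
          gcongr
      _ = M * Real.sqrt (t - t₀) := by rw [mul_div_assoc, Real.div_sqrt]
  · have hcont2 : Continuous fun t : ℝ => M * Real.sqrt (t - t₀) := by fun_prop
    have := hcont2.tendsto t₀
    simp only [sub_self, Real.sqrt_zero, mul_zero] at this
    exact this.mono_left nhdsWithin_le_nhds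

/-- Let `X(t) = (x₁(t), …, x_N(t))` solve the Coulomb
repulsion system `dx_j/dt = Σ_{i ≠ j} α/(x_j - x_i)` on `(t₀, T)`, with the
coordinates continuous on `[t₀, T)`, ordered, pairwise distinct for `t > t₀`,
and such that at `t₀` exactly the two consecutive coordinates `x_k, x_{k+1}`
coincide while all other initial values are pairwise distinct and distinct
from `x_k(t₀)`. Then `(x_k(t) - x_k(t₀))/√(t - t₀) → -√α` and
`(x_{k+1}(t) - x_{k+1}(t₀))/√(t - t₀) → +√α` as `t ↓ t₀`. -/
theorem stmt4 (α : ℝ) (hα : 0 < α) (N : ℕ) (hN : 2 ≤ N) (t₀ T : ℝ) (htT : t₀ < T)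
    (x : Fin N → ℝ → ℝ) (k : Fin N) (hk : (k : ℕ) + 1 < N)
    (hcont : ∀ j : Fin N, ContinuousOn (x j) (Set.Ico t₀ T))
    (hord : ∀ t ∈ Set.Ico t₀ T, ∀ i j : Fin N, i ≤ j → x i t ≤ x j t)
    (hdist : ∀ t ∈ Set.Ioo t₀ T, ∀ i j : Fin N, i ≠ j → x i t ≠ x j t)
    (hode : ∀ j : Fin N, ∀ t ∈ Set.Ioo t₀ T,
      HasDerivAt (x j) (∑ i ∈ Finset.univ.erase j, α / (x j t - x i t)) t)
    (hcoll : x k t₀ = x ⟨(k : ℕ) + 1, hk⟩ t₀)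
    (hinit : ∀ i j : Fin N, i < j → ¬(i = k ∧ j = ⟨(k : ℕ) + 1, hk⟩) →
      x i t₀ < x j t₀) :
    Tendsto (fun t => (x k t - x k t₀) / Real.sqrt (t - t₀))
        (nhdsWithin t₀ (Set.Ioi t₀)) (nhds (-Real.sqrt α)) ∧
    Tendsto (fun t => (x ⟨(k : ℕ) + 1, hk⟩ t - x ⟨(k : ℕ) + 1, hk⟩ t₀) /
          Real.sqrt (t - t₀))
        (nhdsWithin t₀ (Set.Ioi t₀)) (nhds (Real.sqrt α)) := by
  set k' : Fin N := ⟨(k : ℕ) + 1, hk⟩ with hk'def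
  have hkne : k ≠ k' := by
    simp only [hk'def, Ne, Fin.ext_iff]; omega
  have hkle : k ≤ k' := by
    simp only [hk'def, Fin.le_def]; omega
  set S : Finset (Fin N) := (Finset.univ.erase k).erase k' with hSdef
  have hS : ∀ i ∈ S, i ≠ k ∧ i ≠ k' := by
    intro i hi
    simp only [hSdef, Finset.mem_erase] at hi
    exact ⟨hi.2.1, hi.1⟩
  have hsep0 : ∀ i ∈ S, x i t₀ ≠ x k t₀ := by
    intro i hi
    obtain ⟨hik, hik'⟩ := hS i hi
    rcases lt_trichotomy i k with h | h | h
    · exact (hinit i k h (by rintro ⟨h1, -⟩; exact hik h1)).ne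
    · exact absurd h hik
    · exact (hinit k i h (by rintro ⟨-, h2⟩; exact hik' h2)).ne'
  obtain ⟨c, hc, hsep⟩ : ∃ c > 0, ∀ i ∈ S, 2 * c ≤ |x i t₀ - x k t₀| := by
    rcases S.eq_empty_or_nonempty with h | h
    · exact ⟨1, one_pos, by simp [h]⟩
    · refine ⟨S.inf' h (fun i => |x i t₀ - x k t₀|) / 2, ?_, ?_⟩
      · have h1 : ∀ i ∈ S, 0 < |x i t₀ - x k t₀| :=
          fun i hi => abs_pos.mpr (sub_ne_zero.mpr (hsep0 i hi))
        have h2 := (Finset.lt_inf'_iff h).mpr h1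
        linarith
      · intro i hi
        have := Finset.inf'_le (fun i => |x i t₀ - x k t₀|) hi
        linarith
  -- a window on which all coordinates stay close to their initial values
  have hE : ∀ᶠ t in nhdsWithin t₀ (Set.Ico t₀ T),
      (∀ j : Fin N, |x j t - x j t₀| < c / 2) ∧ t < T := by
    refine Filter.Eventually.and ?_ ?_
    · rw [eventually_all]
      intro j
      have h := (hcont j t₀ ⟨le_rfl, htT⟩).tendsto
      exact (Metric.tendsto_nhds.mp h (c / 2) (by positivity)).mono (fun t ht => by
        rwa [Real.dist_eq] at ht)
    · exact eventually_mem_nhdsWithin.mono (fun t ht => ht.2)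
  rw [nhdsWithin_Ico_eq_nhdsGE htT] at hE
  obtain ⟨δ₁, hδ₁, hsub⟩ := mem_nhdsGE_iff_exists_Ico_subset.mp hE
  have hδ₁' : t₀ < δ₁ := hδ₁
  have hδ₁T : ∀ t ∈ Set.Ico t₀ δ₁, t < T := fun t ht => (hsub ht).2
  -- perturbation lemma
  have key : ∀ a b a0 b0 : ℝ, 2 * c ≤ |a0 - b0| → |a - a0| < c / 2 → |b - b0| < c / 2 →
      c ≤ |a - b| := by
    intro a b a0 b0 h1 h2 h3
    obtain ⟨h2a, h2b⟩ := abs_lt.mp h2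
    obtain ⟨h3a, h3b⟩ := abs_lt.mp h3
    rcases abs_cases (a0 - b0) with ⟨he, hs⟩ | ⟨he, hs⟩ <;> rw [he] at h1 <;>
      rcases abs_cases (a - b) with ⟨he2, hs2⟩ | ⟨he2, hs2⟩ <;> rw [he2] <;> linarith
  have hsept : ∀ t ∈ Set.Ico t₀ δ₁, ∀ i ∈ S,
      c ≤ |x k t - x i t| ∧ c ≤ |x k' t - x i t| := by
    intro t ht i hi
    obtain ⟨hclose, -⟩ := hsub ht
    have h4 : 2 * c ≤ |x k t₀ - x i t₀| := by rw [abs_sub_comm]; exact hsep i hi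
    have h4' : 2 * c ≤ |x k' t₀ - x i t₀| := by rw [← hcoll]; exact h4
    exact ⟨key _ _ _ _ h4 (hclose k) (hclose i), key _ _ _ _ h4' (hclose k') (hclose i)⟩
  set M : ℝ := (N : ℝ) * (2 * α / c) with hMdef
  have hM0 : 0 ≤ M := by positivity
  have hterm : ∀ t ∈ Set.Ico t₀ δ₁, ∀ i ∈ S,
      |α / (x k t - x i t)| ≤ α / c ∧ |α / (x k' t - x i t)| ≤ α / c := by
    intro t ht i hi
    obtain ⟨h1, h2⟩ := hsept t ht i hi
    constructor <;> rw [abs_div, abs_of_pos hα]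
    · exact div_le_div_of_nonneg_left hα.le hc h1
    · exact div_le_div_of_nonneg_left hα.le hc h2
  have hcard : (S.card : ℝ) * (2 * α / c) ≤ M := by
    rw [hMdef]
    have h1 : (S.card : ℝ) ≤ (N : ℝ) := by
      exact_mod_cast (Finset.card_le_univ S).trans_eq (by simp)
    exact mul_le_mul_of_nonneg_right h1 (by positivity)
  have hRbound : ∀ t ∈ Set.Ico t₀ δ₁,
      |∑ i ∈ S, (α / (x k' t - x i t) - α / (x k t - x i t))| ≤ M := by
    intro t ht
    calc |∑ i ∈ S, (α / (x k' t - x i t) - α / (x k t - x i t))|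
        ≤ ∑ i ∈ S, |α / (x k' t - x i t) - α / (x k t - x i t)| :=
          Finset.abs_sum_le_sum_abs _ _
      _ ≤ ∑ _i ∈ S, (2 * α / c) := by
          apply Finset.sum_le_sum
          intro i hi
          obtain ⟨hb1, hb2⟩ := hterm t ht i hi
          calc |α / (x k' t - x i t) - α / (x k t - x i t)|
              ≤ |α / (x k' t - x i t)| + |α / (x k t - x i t)| := abs_sub _ _
            _ ≤ α / c + α / c := add_le_add hb2 hb1
            _ = 2 * α / c := by ring
      _ = (S.card : ℝ) * (2 * α / c) := by rw [Finset.sum_const, nsmul_eq_mul]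
      _ ≤ M := hcard
  have hBbound : ∀ t ∈ Set.Ico t₀ δ₁,
      |∑ i ∈ S, (α / (x k' t - x i t) + α / (x k t - x i t))| ≤ M := by
    intro t ht
    calc |∑ i ∈ S, (α / (x k' t - x i t) + α / (x k t - x i t))|
        ≤ ∑ i ∈ S, |α / (x k' t - x i t) + α / (x k t - x i t)| :=
          Finset.abs_sum_le_sum_abs _ _
      _ ≤ ∑ _i ∈ S, (2 * α / c) := by
          apply Finset.sum_le_sum
          intro i hi
          obtain ⟨hb1, hb2⟩ := hterm t ht i hi
          calc |α / (x k' t - x i t) + α / (x k t - x i t)|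
              ≤ |α / (x k' t - x i t)| + |α / (x k t - x i t)| := abs_add_le _ _
            _ ≤ α / c + α / c := add_le_add hb2 hb1
            _ = 2 * α / c := by ring
      _ = (S.card : ℝ) * (2 * α / c) := by rw [Finset.sum_const, nsmul_eq_mul]
      _ ≤ M := hcard
  -- the derivative identities
  have hkmem : k ∈ Finset.univ.erase k' := Finset.mem_erase.mpr ⟨hkne, Finset.mem_univ k⟩
  have hk'mem : k' ∈ Finset.univ.erase k := Finset.mem_erase.mpr ⟨hkne.symm, Finset.mem_univ k'⟩
  have esplit : ∀ t : ℝ,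
      (∑ i ∈ Finset.univ.erase k', α / (x k' t - x i t))
        = α / (x k' t - x k t) + ∑ i ∈ S, α / (x k' t - x i t) ∧
      (∑ i ∈ Finset.univ.erase k, α / (x k t - x i t))
        = -(α / (x k' t - x k t)) + ∑ i ∈ S, α / (x k t - x i t) := by
    intro t
    constructor
    · rw [← Finset.sum_erase_add _ _ hkmem, Finset.erase_right_comm, ← hSdef, add_comm]
    · rw [← Finset.sum_erase_add _ _ hk'mem, ← hSdef, add_comm]
      congr 1
      rw [show x k t - x k' t = -(x k' t - x k t) by ring, div_neg]
  have hu' : ∀ t ∈ Set.Ioo t₀ T, HasDerivAt (fun τ => x k' τ - x k τ)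
      (2 * α / (x k' t - x k t)
        + ∑ i ∈ S, (α / (x k' t - x i t) - α / (x k t - x i t))) t := by
    intro t ht
    have h3 := (hode k' t ht).fun_sub (hode k t ht)
    rw [(esplit t).1, (esplit t).2] at h3
    refine h3.congr_deriv ?_
    rw [Finset.sum_sub_distrib]
    ring
  have hs' : ∀ t ∈ Set.Ioo t₀ T, HasDerivAt (fun τ => x k' τ + x k τ)
      (∑ i ∈ S, (α / (x k' t - x i t) + α / (x k t - x i t))) t := by
    intro t ht
    have h3 := (hode k' t ht).fun_add (hode k t ht)
    rw [(esplit t).1, (esplit t).2] at h3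
    refine h3.congr_deriv ?_
    rw [Finset.sum_add_distrib]
    ring
  -- apply the auxiliary lemmas
  have hu := aux_u α hα t₀ T δ₁ M (fun τ => x k' τ - x k τ)
      (fun τ => ∑ i ∈ S, (α / (x k' τ - x i τ) - α / (x k τ - x i τ)))
      hδ₁' hδ₁T hM0
      ((hcont k').sub (hcont k))
      (by simp [hcoll])
      (fun t ht => sub_nonneg.mpr (hord t ht k k' hkle))
      (fun t ht => sub_pos.mpr
        (lt_of_le_of_ne (hord t (Set.Ioo_subset_Ico_self ht) k k' hkle) (hdist t ht k k' hkne)))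
      hu' hRbound
  have hsl := aux_s t₀ T δ₁ M (fun τ => x k' τ + x k τ)
      (fun τ => ∑ i ∈ S, (α / (x k' τ - x i τ) + α / (x k τ - x i τ)))
      hδ₁' hδ₁T hM0 ((hcont k').add (hcont k)) hs' hBbound
  constructor
  · have h := (hsl.div_const 2).sub (hu.div_const 2)
    rw [show (0:ℝ) / 2 - 2 * Real.sqrt α / 2 = -Real.sqrt α by ring] at h
    apply h.congr
    intro t
    rw [hcoll]
    ring
  · have h := (hsl.div_const 2).add (hu.div_const 2)
    rw [show (0:ℝ) / 2 + 2 * Real.sqrt α / 2 = Real.sqrt α by ring] at h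
    apply h.congr
    intro t
    rw [hcoll]
    ring
end

section
/- (Local growth property.) Let U₁, …, U_n : [0,T] → ℝ be continuous, let g_t be the multislit Loewner flow with these drivers, K_t the associated hulls, and for t ∈ [0,T] set C_t = max( sup{ |U_j(s) − U_j(0)| : 0 ≤ s ≤ t, 1 ≤ j ≤ n }, √(nt) ). Then for every z ∈ K_t there is at least one index j ∈ {1, …, n} with |z − U_j(0)| ≤ 3·C_t. Equivalently, if z ∈ ℍ satisfies |z − U_j(0)| > 3·C_t for every j, then the solution s ↦ g_s(z) exists on [0,t] with g_s(z) ∈ ℍ, and moreover |g_s(z) − z| ≤ C_t for all 0 ≤ s ≤ t. -/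
open Set

/-- A point `z` of the upper half-plane survives the multislit Loewner flow
with drivers `U` up to time `t` if the Loewner initial value problem has a
solution on `[0,t]` staying in the upper half-plane. -/
def Survives {n : ℕ} (U : Fin n → ℝ → ℝ) (z : ℂ) (t : ℝ) : Prop :=
  ∃ g : ℝ → ℂ, g 0 = z ∧ ∀ s ∈ Set.Icc (0 : ℝ) t, 0 < (g s).im ∧
    HasDerivWithinAt g (∑ j : Fin n, 1 / (g s - (U j s : ℂ))) (Set.Icc (0 : ℝ) t) s

/-- The hull at time `t` of the multislit Loewner flow: the set of points of
the upper half-plane whose escape time is at most `t`. -/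
def Hull {n : ℕ} (U : Fin n → ℝ → ℝ) (t : ℝ) : Set ℂ :=
  {z | 0 < z.im ∧ ¬ Survives U z t}

/-- `C_t = max( sup{ |U_j(s) - U_j(0)| : 0 ≤ s ≤ t, 1 ≤ j ≤ n }, √(nt) )`. -/
noncomputable def Cbound {n : ℕ} (U : Fin n → ℝ → ℝ) (t : ℝ) : ℝ :=
  max (sSup {v : ℝ | ∃ (j : Fin n) (s : ℝ), s ∈ Set.Icc (0 : ℝ) t ∧ v = |U j s - U j 0|})
      (Real.sqrt (n * t))

namespace Stmt6Aux

open Metric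

/-- Derivative within a singleton is arbitrary. -/
lemma hasDerivWithinAt_singleton' (f : ℝ → ℂ) (x : ℝ) (d : ℂ) :
    HasDerivWithinAt f d {x} x := by
  simp only [HasDerivWithinAt, HasFDerivWithinAt, HasDerivAtFilter, nhdsWithin_singleton,
    hasFDerivAtFilter_iff_isLittleO, Asymptotics.isLittleO_pure]
  simp

/-- Picard–Lindelöf with the extra information that the solution stays in the
closed ball of radius `R`. -/
lemma exists_solution_mem {v : ℝ → ℂ → ℂ} {tmin tmax : ℝ} {t₀ : Icc tmin tmax} {x₀ : ℂ}
    {a L K : NNReal} (hf : IsPicardLindelof v t₀ x₀ a 0 L K) :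
    ∃ f : ℝ → ℂ, f t₀ = x₀ ∧ ∀ s ∈ Icc tmin tmax,
      f s ∈ closedBall x₀ a ∧ HasDerivWithinAt f (v s (f s)) (Icc tmin tmax) s := by
  obtain ⟨α, hα⟩ := ODE.FunSpace.exists_isFixedPt_next hf (mem_closedBall_self le_rfl)
  refine ⟨α.compProj, by rw [ODE.FunSpace.compProj_val, ← hα, ODE.FunSpace.next_apply₀],
    fun s hs => ⟨α.compProj_mem_closedBall hf.mul_max_le, ?_⟩⟩
  apply ODE.hasDerivWithinAt_picard_Icc t₀.2 hf.continuousOn_uncurry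
    α.continuous_compProj.continuousOn (fun _ _ => α.compProj_mem_closedBall hf.mul_max_le)
    x₀ hs |>.congr_of_mem _ hs
  intro t' ht'
  nth_rw 1 [← hα]
  rw [ODE.FunSpace.compProj_of_mem ht', ODE.FunSpace.next_apply]

end Stmt6Aux

open Stmt6Aux Metric in
theorem stmt6_key (n : ℕ) (hn : 0 < n) (T : ℝ) (U : Fin n → ℝ → ℝ)
    (hU : ∀ j, ContinuousOn (U j) (Set.Icc 0 T)) (t : ℝ) (ht : t ∈ Set.Icc 0 T)
    (z : ℂ) (hz : 0 < z.im)
    (hfar : ∀ j : Fin n, 3 * Cbound U t < ‖z - (U j 0 : ℂ)‖) :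
    ∃ g : ℝ → ℂ, g 0 = z ∧ ∀ s ∈ Set.Icc (0 : ℝ) t,
      0 < (g s).im ∧
      HasDerivWithinAt g (∑ j : Fin n, 1 / (g s - (U j s : ℂ))) (Set.Icc (0 : ℝ) t) s ∧
      ‖g s - z‖ ≤ Cbound U t := by
  obtain ⟨ht0, htT⟩ := ht
  set C := Cbound U t with hCdef
  have hsqrt : Real.sqrt (n * t) ≤ C := le_max_right _ _
  have hC0 : 0 ≤ C := (Real.sqrt_nonneg _).trans hsqrt
  have hCsq : (n : ℝ) * t ≤ C ^ 2 := by
    have h1 : ((n : ℝ) * t) = (Real.sqrt ((n : ℝ) * t)) ^ 2 :=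
      (Real.sq_sqrt (by positivity)).symm
    calc (n : ℝ) * t = (Real.sqrt ((n : ℝ) * t)) ^ 2 := h1
      _ ≤ C ^ 2 := by gcongr
  have hCU : ∀ j, ∀ s ∈ Icc (0 : ℝ) t, |U j s - U j 0| ≤ C := by
    intro j s hs
    have hset : {v : ℝ | ∃ (j : Fin n) (s : ℝ), s ∈ Set.Icc (0 : ℝ) t ∧ v = |U j s - U j 0|}
        = ⋃ j : Fin n, (fun s => |U j s - U j 0|) '' Icc (0 : ℝ) t := by
      ext v
      simp only [Set.mem_setOf_eq, Set.mem_iUnion, Set.mem_image]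
      exact ⟨fun ⟨j, s, hs, hv⟩ => ⟨j, s, hs, hv.symm⟩, fun ⟨j, s, hs, hv⟩ => ⟨j, s, hs, hv.symm⟩⟩
    have hbdd : BddAbove {v : ℝ | ∃ (j : Fin n) (s : ℝ), s ∈ Set.Icc (0 : ℝ) t ∧ v = |U j s - U j 0|} := by
      rw [hset]
      refine IsCompact.bddAbove (isCompact_iUnion fun j => ?_)
      refine isCompact_Icc.image_of_continuousOn ?_
      exact (((hU j).mono (Icc_subset_Icc le_rfl htT)).sub continuousOn_const).abs
    exact le_trans (le_csSup hbdd ⟨j, s, hs, rfl⟩) (le_max_left _ _)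
  rcases eq_or_lt_of_le ht0 with h0 | htpos
  · -- t = 0
    refine ⟨fun _ => z, rfl, fun s hs => ?_⟩
    have hIcc : Icc (0 : ℝ) t = {0} := by rw [← h0, Icc_self]
    rw [hIcc] at hs ⊢
    have hs0 : s = 0 := hs
    subst hs0
    refine ⟨hz, hasDerivWithinAt_singleton' _ _ _, by simpa using hC0⟩
  -- 0 < t
  have hCpos : 0 < C := lt_of_lt_of_le (Real.sqrt_pos.2 (by positivity)) hsqrt
  set v : ℝ → ℂ → ℂ := fun s w => ∑ j : Fin n, (w - (U j s : ℂ))⁻¹ with hvdef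
  have hdist : ∀ s ∈ Icc (0 : ℝ) t, ∀ w ∈ closedBall z C, ∀ j : Fin n,
      C ≤ ‖w - (U j s : ℂ)‖ := by
    intro s hs w hw j
    have h1 : ‖z - w‖ ≤ C := by
      rw [← Complex.dist_eq, dist_comm]
      exact mem_closedBall.1 hw
    have h2 : ‖(U j s : ℂ) - (U j 0 : ℂ)‖ ≤ C := by
      rw [← Complex.ofReal_sub, Complex.norm_real, Real.norm_eq_abs]
      exact hCU j s hs
    have h3 := hfar j
    have htri : ‖z - (U j 0 : ℂ)‖ ≤
        ‖z - w‖ + ‖w - (U j s : ℂ)‖ +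
          ‖(U j s : ℂ) - (U j 0 : ℂ)‖ := by
      have heq : z - (U j 0 : ℂ) = (z - w) + (w - (U j s : ℂ)) + ((U j s : ℂ) - (U j 0 : ℂ)) := by
        ring
      rw [heq]
      exact (norm_add_le _ _).trans (by gcongr; exact norm_add_le _ _)
    linarith
  have hne : ∀ s ∈ Icc (0 : ℝ) t, ∀ w ∈ closedBall z C, ∀ j : Fin n,
      w - (U j s : ℂ) ≠ 0 := by
    intro s hs w hw j h
    have := hdist s hs w hw j
    rw [h, norm_zero] at this
    exact absurd this (not_le.2 hCpos)
  have hlip : ∀ s ∈ Icc (0 : ℝ) t,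
      LipschitzOnWith (Real.toNNReal ((n : ℝ) / C ^ 2)) (v s) (closedBall z C) := by
    intro s hs
    apply LipschitzOnWith.of_dist_le_mul
    intro x hx y hy
    have key : ∀ j : Fin n, ‖(x - (U j s : ℂ))⁻¹ - (y - (U j s : ℂ))⁻¹‖ ≤
        C⁻¹ * C⁻¹ * dist x y := by
      intro j
      have hax := hne s hs x hx j
      have hay := hne s hs y hy j
      have heq : (x - (U j s : ℂ))⁻¹ - (y - (U j s : ℂ))⁻¹ =
          (y - x) * ((x - (U j s : ℂ))⁻¹ * (y - (U j s : ℂ))⁻¹) := by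
        field_simp
        ring
      rw [heq, norm_mul, norm_mul, norm_inv, norm_inv]
      have h1 : ‖x - (U j s : ℂ)‖⁻¹ ≤ C⁻¹ := by
        apply inv_anti₀ hCpos
        exact hdist s hs x hx j
      have h2 : ‖y - (U j s : ℂ)‖⁻¹ ≤ C⁻¹ := by
        apply inv_anti₀ hCpos
        exact hdist s hs y hy j
      have h3 : ‖y - x‖ = dist x y := by rw [dist_comm, dist_eq_norm]
      rw [h3]
      calc dist x y * (‖x - (U j s : ℂ)‖⁻¹ * ‖y - (U j s : ℂ)‖⁻¹)
          ≤ dist x y * (C⁻¹ * C⁻¹) := by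
            apply mul_le_mul_of_nonneg_left _ dist_nonneg
            exact mul_le_mul h1 h2 (by positivity) (by positivity)
        _ = C⁻¹ * C⁻¹ * dist x y := by ring
    calc dist (v s x) (v s y)
        = ‖∑ j : Fin n, ((x - (U j s : ℂ))⁻¹ - (y - (U j s : ℂ))⁻¹)‖ := by
          rw [dist_eq_norm, hvdef, ← Finset.sum_sub_distrib]
      _ ≤ ∑ j : Fin n, ‖(x - (U j s : ℂ))⁻¹ - (y - (U j s : ℂ))⁻¹‖ := norm_sum_le _ _
      _ ≤ ∑ _j : Fin n, C⁻¹ * C⁻¹ * dist x y := Finset.sum_le_sum fun j _ => key j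
      _ = (n : ℝ) / C ^ 2 * dist x y := by
          rw [Finset.sum_const, Finset.card_univ, Fintype.card_fin, nsmul_eq_mul]
          ring
      _ = (Real.toNNReal ((n : ℝ) / C ^ 2) : ℝ) * dist x y := by
          rw [Real.coe_toNNReal _ (by positivity)]
  have hcont : ∀ x ∈ closedBall z C, ContinuousOn (fun s => v s x) (Icc (0 : ℝ) t) := by
    intro x hx
    apply continuousOn_finset_sum
    intro j _
    refine ContinuousOn.inv₀ ?_ ?_
    · exact continuousOn_const.sub
        (Complex.continuous_ofReal.comp_continuousOn ((hU j).mono (Icc_subset_Icc le_rfl htT)))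
    · intro s hs
      exact hne s hs x hx j
  have hnorm : ∀ s ∈ Icc (0 : ℝ) t, ∀ x ∈ closedBall z C, ‖v s x‖ ≤ (n : ℝ) / C := by
    intro s hs x hx
    calc ‖v s x‖ ≤ ∑ j : Fin n, ‖(x - (U j s : ℂ))⁻¹‖ := norm_sum_le _ _
      _ ≤ ∑ _j : Fin n, C⁻¹ := by
          refine Finset.sum_le_sum fun j _ => ?_
          rw [norm_inv]
          exact inv_anti₀ hCpos (hdist s hs x hx j)
      _ = (n : ℝ) / C := by
          rw [Finset.sum_const, Finset.card_univ, Fintype.card_fin, nsmul_eq_mul]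
          ring
  have hpl : IsPicardLindelof v (tmin := 0) (tmax := t) ⟨0, le_rfl, ht0⟩ z ⟨C, hC0⟩ 0
      ⟨(n : ℝ) / C, by positivity⟩ (Real.toNNReal ((n : ℝ) / C ^ 2)) :=
    { lipschitzOnWith := hlip
      continuousOn := hcont
      norm_le := hnorm
      mul_max_le := by
        have : (n : ℝ) / C * t ≤ C := by
          rw [div_mul_eq_mul_div, div_le_iff₀ hCpos]
          nlinarith
        simp only [ht0, sub_zero, tsub_zero, NNReal.coe_zero, max_eq_left]
        exact this }
  obtain ⟨f, hf0, hfs⟩ := exists_solution_mem hpl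
  have hf0' : f 0 = z := hf0
  have hfs' : ∀ s ∈ Icc (0 : ℝ) t, f s ∈ closedBall z C ∧
      HasDerivWithinAt f (v s (f s)) (Icc (0 : ℝ) t) s := hfs
  -- positivity of imaginary part
  have hfc : ContinuousOn f (Icc (0 : ℝ) t) := fun r hr => ((hfs' r hr).2).continuousWithinAt
  have him : ∀ s ∈ Icc (0 : ℝ) t, 0 < (f s).im := by
    by_contra hcon
    push_neg at hcon
    obtain ⟨s₁, hs₁, hs₁im⟩ := hcon
    set A := {s | s ∈ Icc (0 : ℝ) t ∧ (f s).im ≤ 0} with hAdef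
    have hAclosed : IsClosed A := by
      have : A = Icc (0 : ℝ) t ∩ (fun s => (f s).im) ⁻¹' Iic 0 := by
        ext r; simp [hAdef]
      rw [this]
      exact (Complex.continuous_im.comp_continuousOn hfc).preimage_isClosed_of_isClosed
        isClosed_Icc isClosed_Iic
    have hA : A.Nonempty := ⟨s₁, hs₁, hs₁im⟩
    have hAbdd : BddBelow A := ⟨0, fun a ha => ha.1.1⟩
    set s₀ := sInf A with hs₀def
    have hs₀A : s₀ ∈ A := hAclosed.csInf_mem hA hAbdd
    have hs₀t : s₀ ∈ Icc (0 : ℝ) t := hs₀A.1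
    have hpos_lt : ∀ r, 0 ≤ r → r < s₀ → 0 < (f r).im := by
      intro r hr0 hrs
      by_contra hr
      push_neg at hr
      exact absurd (csInf_le hAbdd ⟨⟨hr0, hrs.le.trans hs₀t.2⟩, hr⟩) (not_le.2 hrs)
    have hs₀pos : 0 < s₀ := by
      rcases hs₀t.1.lt_or_eq with h | h
      · exact h
      · exfalso
        have := hs₀A.2
        rw [← h, hf0'] at this
        exact absurd this (not_le.2 hz)
    have him0 : (f s₀).im = 0 := by
      refine le_antisymm hs₀A.2 ?_
      have hcw : ContinuousWithinAt (fun r => (f r).im) (Ico 0 s₀) s₀ :=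
        ((Complex.continuous_im.comp_continuousOn hfc) s₀ hs₀t).mono
          (fun r hr => ⟨hr.1, hr.2.le.trans hs₀t.2⟩)
      have hcl : s₀ ∈ closure (Ico (0 : ℝ) s₀) := by
        rw [closure_Ico (ne_of_lt hs₀pos)]
        exact ⟨hs₀t.1, le_rfl⟩
      have hmem := hcw.mem_closure_image hcl
      have hsub : (fun r => (f r).im) '' Ico (0 : ℝ) s₀ ⊆ Ici 0 := by
        rintro y ⟨r, hr, rfl⟩
        exact (hpos_lt r hr.1 hr.2).le
      have : (f s₀).im ∈ closure (Ici (0 : ℝ)) := closure_mono hsub hmem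
      rwa [isClosed_Ici.closure_eq] at this
    -- Grönwall backwards from s₀
    set K : ℝ := (n : ℝ) / C ^ 2 with hKdef
    set F : ℝ → ℝ := fun σ => (f (s₀ - σ)).im with hFdef
    set F' : ℝ → ℝ := fun σ => -(v (s₀ - σ) (f (s₀ - σ))).im with hF'def
    have hmaps : ∀ σ ∈ Icc (0 : ℝ) s₀, s₀ - σ ∈ Icc (0 : ℝ) t := by
      intro σ hσ
      exact ⟨by linarith [hσ.2], by linarith [hσ.1, hs₀t.2]⟩
    have hFds : ∀ σ ∈ Icc (0 : ℝ) s₀, HasDerivWithinAt F (F' σ) (Icc 0 s₀) σ := by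
      intro σ hσ
      have hder := (hfs' _ (hmaps σ hσ)).2
      have him_der : HasDerivWithinAt (fun r => (f r).im)
          ((v (s₀ - σ) (f (s₀ - σ))).im) (Icc (0 : ℝ) t) (s₀ - σ) :=
        Complex.imCLM.hasFDerivAt.comp_hasDerivWithinAt _ hder
      have hφ : HasDerivWithinAt (fun σ : ℝ => s₀ - σ) (-1) (Icc (0 : ℝ) s₀) σ :=
        (hasDerivWithinAt_id σ _).const_sub s₀
      have hm : MapsTo (fun σ : ℝ => s₀ - σ) (Icc (0 : ℝ) s₀) (Icc (0 : ℝ) t) :=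
        fun r hr => hmaps r hr
      have := him_der.comp σ hφ hm
      simpa [hFdef, hF'def, Function.comp_def] using this
    have hFcont : ContinuousOn F (Icc (0 : ℝ) s₀) := fun σ hσ => (hFds σ hσ).continuousWithinAt
    have hbound : ∀ σ ∈ Ico (0 : ℝ) s₀, ‖F' σ‖ ≤ K * ‖F σ‖ + 0 := by
      intro σ hσ
      have hσ' : σ ∈ Icc (0 : ℝ) s₀ := Ico_subset_Icc_self hσ
      have hsmem : s₀ - σ ∈ Icc (0 : ℝ) t := hmaps σ hσ'
      have hball := (hfs' _ hsmem).1
      rw [add_zero, hF'def, norm_neg, Real.norm_eq_abs, Real.norm_eq_abs]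
      have hterm : ∀ j : Fin n, |((f (s₀ - σ) - (U j (s₀ - σ) : ℂ))⁻¹).im| ≤
          |(f (s₀ - σ)).im| / C ^ 2 := by
        intro j
        set w := f (s₀ - σ) - (U j (s₀ - σ) : ℂ) with hwdef
        have hC2 : C ^ 2 ≤ Complex.normSq w := by
          rw [Complex.normSq_eq_norm_sq]
          gcongr
          exact hdist _ hsmem _ hball j
        have hwim : w.im = (f (s₀ - σ)).im := by
          rw [hwdef, Complex.sub_im, Complex.ofReal_im, sub_zero]
        rw [Complex.inv_im, hwim, abs_div, abs_neg, abs_of_nonneg (Complex.normSq_nonneg w)]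
        exact div_le_div_of_nonneg_left (abs_nonneg _) (by positivity) hC2
      calc |(v (s₀ - σ) (f (s₀ - σ))).im|
          = |∑ j : Fin n, ((f (s₀ - σ) - (U j (s₀ - σ) : ℂ))⁻¹).im| := by
            rw [hvdef]; rw [Complex.im_sum]
        _ ≤ ∑ j : Fin n, |((f (s₀ - σ) - (U j (s₀ - σ) : ℂ))⁻¹).im| :=
            Finset.abs_sum_le_sum_abs _ _
        _ ≤ ∑ _j : Fin n, |(f (s₀ - σ)).im| / C ^ 2 := Finset.sum_le_sum fun j _ => hterm j
        _ = K * |(f (s₀ - σ)).im| := by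
            rw [Finset.sum_const, Finset.card_univ, Fintype.card_fin, nsmul_eq_mul, hKdef]
            ring
        _ = K * |F σ| := by rw [hFdef]
    have hgron := norm_le_gronwallBound_of_norm_deriv_right_le (δ := 0) hFcont
      (fun σ hσ => (hFds σ (Ico_subset_Icc_self hσ)).mono_of_mem_nhdsWithin (Icc_mem_nhdsGE_of_mem hσ))
      (by simp [hFdef, him0]) hbound
    have hfinal := hgron s₀ ⟨hs₀pos.le, le_rfl⟩
    rw [sub_zero, gronwallBound_ε0_δ0] at hfinal
    have : F s₀ = z.im := by rw [hFdef]; simp [hf0']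
    rw [this, Real.norm_eq_abs] at hfinal
    have := abs_nonneg z.im
    have hzim0 : z.im = 0 := abs_eq_zero.1 (le_antisymm hfinal (abs_nonneg _))
    exact absurd hzim0 (ne_of_gt hz)
  refine ⟨f, hf0', fun s hs => ⟨him s hs, ?_, ?_⟩⟩
  · have := (hfs' s hs).2
    have heq : v s (f s) = ∑ j : Fin n, 1 / (f s - (U j s : ℂ)) := by
      rw [hvdef]
      simp [one_div]
    rwa [heq] at this
  · simpa [mem_closedBall, Complex.dist_eq] using (hfs' s hs).1

/-- local growth property. Every point of the hull `K_t` is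
within distance `3·C_t` of one of the initial driving points `U_j(0)`;
equivalently, if `|z - U_j(0)| > 3·C_t` for every `j`, then the Loewner
solution from `z` exists on `[0,t]`, stays in the upper half-plane, and
satisfies `|g_s(z) - z| ≤ C_t` for all `0 ≤ s ≤ t`. -/
theorem stmt6 (n : ℕ) (hn : 0 < n) (T : ℝ) (U : Fin n → ℝ → ℝ)
    (hU : ∀ j, ContinuousOn (U j) (Set.Icc 0 T)) (t : ℝ) (ht : t ∈ Set.Icc 0 T) :
    (∀ z ∈ Hull U t, ∃ j : Fin n, ‖z - (U j 0 : ℂ)‖ ≤ 3 * Cbound U t) ∧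
    (∀ z : ℂ, 0 < z.im →
      (∀ j : Fin n, 3 * Cbound U t < ‖z - (U j 0 : ℂ)‖) →
      ∃ g : ℝ → ℂ, g 0 = z ∧ ∀ s ∈ Set.Icc (0 : ℝ) t,
        0 < (g s).im ∧
        HasDerivWithinAt g (∑ j : Fin n, 1 / (g s - (U j s : ℂ))) (Set.Icc (0 : ℝ) t) s ∧
        ‖g s - z‖ ≤ Cbound U t) := by
  constructor
  · intro z hz
    by_contra hcon
    push_neg at hcon
    obtain ⟨g, hg0, hgs⟩ := stmt6_key n hn T U hU t ht z hz.1 hcon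
    exact hz.2 ⟨g, hg0, fun s hs => ⟨(hgs s hs).1, (hgs s hs).2.1⟩⟩
  · intro z hz hfar
    exact stmt6_key n hn T U hU t ht z hz hfar
end

section
/- (Grönwall stability of the reverse Loewner flow.) Fix t ∈ [0,1], n ≥ 2, an index k, and ŷ > 0. Let V₁, V₂ : [0,t] → ℝ and U₁, …, U_n : [0,t] → ℝ be continuous, and for z ∈ ℍ let h_s(z) and h_s^U(z) solve the reverse Loewner equations dh_s/ds = −1/(h_s − V₁(t−s)) − 1/(h_s − V₂(t−s)) and dh_s^U/ds = −Σ_{j=1}^n 1/(h_s^U − U_j(t−s)) on [0,t] with h₀(z) = h₀^U(z) = z. Let M = max_{s∈[0,t], j∈{1,2}} |V_j(s) − U_{k+j−1}(s)|, and suppose φ̄ ≥ 0 is such that Σ_{j ≠ k, k+1} 1/|h_s^U(z) − U_j(t−s)| ≤ φ̄ for all s ∈ [0,t]. Then for every z with Im z ≥ ŷ, |h_t(z) − h_t^U(z)| ≤ (2M/ŷ² + φ̄)·exp(2/ŷ²). -/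
open Set

lemma floor_lemma (g d : ℝ → ℝ) (a b y : ℝ) (hy : 0 < y)
    (hd : ∀ s ∈ Icc a b, HasDerivWithinAt g (d s) (Icc a b) s)
    (hpos : ∀ s ∈ Icc a b, 0 < g s → 0 ≤ d s)
    (ha : y ≤ g a) :
    ∀ s ∈ Icc a b, y ≤ g s := by
  have hg : ContinuousOn g (Icc a b) := fun s hs => (hd s hs).continuousWithinAt
  set S : Set ℝ := {x | ∀ u ∈ Icc a x, y ≤ g u} with hS
  have hsub : Icc a b ⊆ S := by
    by_cases hab : a ≤ b
    · apply IsClosed.Icc_subset_of_forall_exists_gt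
      · apply IsSeqClosed.isClosed
        intro xs x hxs hx
        have hxI : x ∈ Icc a b := isClosed_Icc.isSeqClosed (fun n => (hxs n).2) hx
        refine ⟨?_, hxI⟩
        intro u hu
        rcases lt_or_eq_of_le hu.2 with hlt | heq
        · obtain ⟨N, hN⟩ := (hx.eventually (eventually_gt_nhds hlt)).exists
          exact (hxs N).1 u ⟨hu.1, hN.le⟩
        · subst heq
          have htend : Filter.Tendsto (fun n => g (xs n)) Filter.atTop (nhds (g u)) := by
            refine ((hg u hxI).tendsto).comp ?_
            exact tendsto_nhdsWithin_of_tendsto_nhds_of_eventually_within xs hx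
              (Filter.Eventually.of_forall fun n => (hxs n).2)
          refine ge_of_tendsto htend (Filter.Eventually.of_forall fun n => ?_)
          exact (hxs n).1 (xs n) ⟨(hxs n).2.1, le_refl _⟩
      · intro u hu
        have : u = a := le_antisymm hu.2 hu.1
        subst this; exact ha
      · intro x hx y' hy'
        have hxI : x ∈ Icc a b := ⟨hx.2.1, hx.2.2.le⟩
        have hgx : y ≤ g x := hx.1 x ⟨hx.2.1, le_refl _⟩
        have hy2 : y / 2 < g x := lt_of_lt_of_le (by linarith) hgx
        have hev : ∀ᶠ u in nhdsWithin x (Icc a b), y / 2 < g u :=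
          (hg x hxI).eventually (eventually_gt_nhds hy2)
        rw [eventually_nhdsWithin_iff, Metric.eventually_nhds_iff] at hev
        obtain ⟨δ, hδ, hball⟩ := hev
        set x' : ℝ := min (min (x + δ / 2) b) y' with hx'
        have hxx' : x < x' := by
          apply lt_min (lt_min (by linarith) hx.2.2) hy'
        have hx'b : x' ≤ b := le_trans (min_le_left _ _) (min_le_right _ _)
        have hax' : a ≤ x' := le_trans hx.2.1 hxx'.le
        have hgpos : ∀ u ∈ Icc a x', 0 < g u := by
          intro u hu
          rcases le_or_gt u x with h1 | h1
          · exact lt_of_lt_of_le hy (hx.1 u ⟨hu.1, h1⟩)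
          · have hub : u ∈ Icc a b := ⟨hu.1, le_trans hu.2 hx'b⟩
            have hdist : dist u x < δ := by
              rw [Real.dist_eq, abs_of_pos (by linarith)]
              have : u ≤ x + δ / 2 := le_trans hu.2 (le_trans (min_le_left _ _) (min_le_left _ _))
              linarith
            linarith [hball hdist hub]
        have hmono : MonotoneOn g (Icc a x') := by
          apply monotoneOn_of_hasDerivWithinAt_nonneg (convex_Icc a x')
            (hg.mono (Icc_subset_Icc_right hx'b)) (f' := d)
          · intro u hu
            rw [interior_Icc] at hu
            exact ((hd u ⟨hu.1.le, le_trans hu.2.le hx'b⟩).mono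
              (by rw [interior_Icc]; exact Ioo_subset_Icc_self.trans (Icc_subset_Icc_right hx'b)))
          · intro u hu
            rw [interior_Icc] at hu
            have huI : u ∈ Icc a b := ⟨hu.1.le, le_trans hu.2.le hx'b⟩
            exact hpos u huI (hgpos u ⟨hu.1.le, hu.2.le⟩)
        refine ⟨x', ?_, hxx', min_le_right _ _⟩
        intro u hu
        calc y ≤ g a := ha
        _ ≤ g u := hmono ⟨le_refl a, hax'⟩ hu hu.1
    · intro u hu; exact absurd (le_trans hu.1 hu.2) hab
  intro s hs
  exact hsub hs s ⟨hs.1, le_refl _⟩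

lemma pair_bound (a b : ℂ) (y F Mv : ℝ) (hy : 0 < y) (hA : y ≤ a.im) (hB : y ≤ b.im)
    (hab : ‖a - b‖ ≤ F + Mv) : ‖1 / b - 1 / a‖ ≤ (F + Mv) / y ^ 2 := by
  have ha0 : a ≠ 0 := fun h => by simp [h] at hA; linarith
  have hb0 : b ≠ 0 := fun h => by simp [h] at hB; linarith
  have hna : y ≤ ‖a‖ := le_trans hA (le_trans (le_abs_self _) (Complex.abs_im_le_norm a))
  have hnb : y ≤ ‖b‖ := le_trans hB (le_trans (le_abs_self _) (Complex.abs_im_le_norm b))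
  have heq : 1 / b - 1 / a = (a - b) / (b * a) := by field_simp
  rw [heq, norm_div, norm_mul]
  calc ‖a - b‖ / (‖b‖ * ‖a‖) ≤ (F + Mv) / (y * y) := by
        apply div_le_div₀ (le_trans (norm_nonneg _) hab) hab (by positivity)
        exact mul_le_mul hnb hna hy.le (norm_nonneg _)
  _ = (F + Mv) / y ^ 2 := by ring_nf


/-- Grönwall stability of the reverse Loewner flow.
Fix `t ∈ [0,1]`, `n ≥ 2`, an index `k` with `k+1 < n`, and `ŷ > 0`. Let `h`
and `hU` solve the reverse Loewner equations with drivers `(V₁, V₂)` and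
`(U₁, …, U_n)` respectively, started at the same point `z` with `Im z ≥ ŷ`.
If `M` bounds `|V₁(s) - U_k(s)|` and `|V₂(s) - U_{k+1}(s)|` on `[0,t]`, and
`φ̄ ≥ 0` bounds `Σ_{j ≠ k, k+1} 1/|hU_s - U_j(t-s)|` along the trajectory,
then `|h_t - hU_t| ≤ (2M/ŷ² + φ̄)·exp(2/ŷ²)`. -/
theorem stmt10 (t : ℝ) (ht0 : 0 ≤ t) (ht1 : t ≤ 1)
    (n : ℕ) (hn : 2 ≤ n) (k : Fin n) (hk : (k : ℕ) + 1 < n)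
    (yhat : ℝ) (hy : 0 < yhat)
    (V₁ V₂ : ℝ → ℝ) (U : Fin n → ℝ → ℝ)
    (hV₁ : ContinuousOn V₁ (Set.Icc 0 t)) (hV₂ : ContinuousOn V₂ (Set.Icc 0 t))
    (hU : ∀ j, ContinuousOn (U j) (Set.Icc 0 t))
    (z : ℂ) (hz : yhat ≤ z.im)
    (h hU' : ℝ → ℂ) (hh0 : h 0 = z) (hhU0 : hU' 0 = z)
    (hsol : ∀ s ∈ Set.Icc (0 : ℝ) t,
      HasDerivWithinAt h
        (-(1 / (h s - (V₁ (t - s) : ℂ))) - 1 / (h s - (V₂ (t - s) : ℂ)))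
        (Set.Icc (0 : ℝ) t) s)
    (hUsol : ∀ s ∈ Set.Icc (0 : ℝ) t,
      HasDerivWithinAt hU'
        (-∑ j : Fin n, 1 / (hU' s - (U j (t - s) : ℂ)))
        (Set.Icc (0 : ℝ) t) s)
    (M : ℝ)
    (hM : ∀ s ∈ Set.Icc (0 : ℝ) t,
      |V₁ s - U k s| ≤ M ∧ |V₂ s - U ⟨(k : ℕ) + 1, hk⟩ s| ≤ M)
    (φbar : ℝ) (hφ0 : 0 ≤ φbar)
    (hφ : ∀ s ∈ Set.Icc (0 : ℝ) t,
      ∑ j ∈ (Finset.univ.erase k).erase ⟨(k : ℕ) + 1, hk⟩,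
        1 / ‖hU' s - (U j (t - s) : ℂ)‖ ≤ φbar) :
    ‖h t - hU' t‖ ≤ (2 * M / yhat ^ 2 + φbar) * Real.exp (2 / yhat ^ 2) := by
  have htt : t ∈ Set.Icc (0:ℝ) t := ⟨ht0, le_refl t⟩
  have h0I : (0:ℝ) ∈ Set.Icc (0:ℝ) t := ⟨le_refl 0, ht0⟩
  -- imaginary part floors
  have hfloorh : ∀ s ∈ Set.Icc (0:ℝ) t, yhat ≤ (h s).im := by
    apply floor_lemma (fun s => (h s).im)
      (fun s => (-(1 / (h s - (V₁ (t - s) : ℂ))) - 1 / (h s - (V₂ (t - s) : ℂ))).im) 0 t yhat hy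
    · intro s hs
      exact Complex.imCLM.hasFDerivAt.comp_hasDerivWithinAt s (hsol s hs)
    · intro s hs hgs
      have : (-(1 / (h s - (V₁ (t - s) : ℂ))) - 1 / (h s - (V₂ (t - s) : ℂ))).im
          = (h s).im / Complex.normSq (h s - (V₁ (t - s) : ℂ))
            + (h s).im / Complex.normSq (h s - (V₂ (t - s) : ℂ)) := by
        simp [Complex.div_im, Complex.sub_im, Complex.ofReal_im, Complex.one_re, Complex.one_im]
        ring
      rw [this]
      exact add_nonneg (div_nonneg hgs.le (Complex.normSq_nonneg _))
        (div_nonneg hgs.le (Complex.normSq_nonneg _))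
    · rw [hh0]; exact hz
  have hfloorU : ∀ s ∈ Set.Icc (0:ℝ) t, yhat ≤ (hU' s).im := by
    apply floor_lemma (fun s => (hU' s).im)
      (fun s => (-∑ j : Fin n, 1 / (hU' s - (U j (t - s) : ℂ))).im) 0 t yhat hy
    · intro s hs
      exact Complex.imCLM.hasFDerivAt.comp_hasDerivWithinAt s (hUsol s hs)
    · intro s hs hgs
      have : (-∑ j : Fin n, 1 / (hU' s - (U j (t - s) : ℂ))).im
          = ∑ j : Fin n, (hU' s).im / Complex.normSq (hU' s - (U j (t - s) : ℂ)) := by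
        rw [Complex.neg_im, Complex.im_sum, ← Finset.sum_neg_distrib]
        apply Finset.sum_congr rfl
        intro j _
        simp [Complex.div_im, Complex.sub_im, Complex.ofReal_im, Complex.one_re, Complex.one_im,
          neg_div]
      rw [this]
      apply Finset.sum_nonneg
      intro j _
      exact div_nonneg hgs.le (Complex.normSq_nonneg _)
    · rw [hhU0]; exact hz
  -- Gronwall setup
  set k' : Fin n := ⟨(k : ℕ) + 1, hk⟩ with hk'def
  have hk'ne : k' ≠ k := by
    simp only [hk'def, Fin.ne_iff_vne, Fin.val_mk]
    omega
  have hM0 : 0 ≤ M := le_trans (abs_nonneg _) (hM 0 h0I).1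
  set K : ℝ := 2 / yhat ^ 2 with hKdef
  set ε : ℝ := 2 * M / yhat ^ 2 + φbar with hεdef
  have hK0 : 0 < K := by positivity
  have hε0 : 0 ≤ ε := by positivity
  set f : ℝ → ℂ := fun s => h s - hU' s with hfdef
  set D : ℝ → ℂ := fun s =>
    (-(1 / (h s - (V₁ (t - s) : ℂ))) - 1 / (h s - (V₂ (t - s) : ℂ)))
      - (-∑ j : Fin n, 1 / (hU' s - (U j (t - s) : ℂ))) with hDdef
  have hfc : ContinuousOn f (Set.Icc 0 t) :=
    fun s hs => ((hsol s hs).sub (hUsol s hs)).continuousWithinAt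
  have hfd : ∀ x ∈ Set.Ico (0:ℝ) t, HasDerivWithinAt f (D x) (Set.Ici x) x := by
    intro x hx
    exact ((hsol x (Set.Ico_subset_Icc_self hx)).sub
      (hUsol x (Set.Ico_subset_Icc_self hx))).mono_of_mem_nhdsWithin (Icc_mem_nhdsGE_of_mem hx)
  have hbound : ∀ x ∈ Set.Ico (0:ℝ) t, ‖D x‖ ≤ K * ‖f x‖ + ε := by
    intro x hx
    have hxI : x ∈ Set.Icc (0:ℝ) t := Set.Ico_subset_Icc_self hx
    have htx : t - x ∈ Set.Icc (0:ℝ) t := ⟨by linarith [hx.2], by linarith [hx.1]⟩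
    set a₁ : ℂ := h x - (V₁ (t - x) : ℂ) with ha₁
    set a₂ : ℂ := h x - (V₂ (t - x) : ℂ) with ha₂
    set b : Fin n → ℂ := fun j => hU' x - (U j (t - x) : ℂ) with hb
    have hima₁ : yhat ≤ a₁.im := by
      rw [ha₁]; simpa [Complex.sub_im, Complex.ofReal_im] using hfloorh x hxI
    have hima₂ : yhat ≤ a₂.im := by
      rw [ha₂]; simpa [Complex.sub_im, Complex.ofReal_im] using hfloorh x hxI
    have himb : ∀ j, yhat ≤ (b j).im := by
      intro j; rw [hb]; simpa [Complex.sub_im, Complex.ofReal_im] using hfloorU x hxI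
    have hsplit : (∑ j : Fin n, 1 / b j)
        = 1 / b k + (1 / b k' + ∑ j ∈ (Finset.univ.erase k).erase k', 1 / b j) := by
      rw [← Finset.add_sum_erase _ _ (Finset.mem_univ k)]
      congr 1
      rw [← Finset.add_sum_erase _ _
        (Finset.mem_erase.2 ⟨hk'ne, Finset.mem_univ k'⟩)]
    have hDeq : D x = (1 / b k - 1 / a₁) + (1 / b k' - 1 / a₂)
        + ∑ j ∈ (Finset.univ.erase k).erase k', 1 / b j := by
      rw [hDdef]
      simp only [← ha₁, ← ha₂, ← hb]
      rw [hsplit]; ring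
    have hP₁ : ‖1 / b k - 1 / a₁‖ ≤ (‖f x‖ + M) / yhat ^ 2 := by
      apply pair_bound a₁ (b k) yhat (‖f x‖) M hy hima₁ (himb k)
      have : a₁ - b k = f x + ((U k (t - x) - V₁ (t - x) : ℝ) : ℂ) := by
        rw [ha₁, hb, hfdef]; push_cast; ring
      rw [this]
      refine le_trans (norm_add_le _ _) ?_
      have : ‖((U k (t - x) - V₁ (t - x) : ℝ) : ℂ)‖ ≤ M := by
        rw [Complex.norm_real, Real.norm_eq_abs, abs_sub_comm]
        exact (hM (t - x) htx).1
      linarith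
    have hP₂ : ‖1 / b k' - 1 / a₂‖ ≤ (‖f x‖ + M) / yhat ^ 2 := by
      apply pair_bound a₂ (b k') yhat (‖f x‖) M hy hima₂ (himb k')
      have : a₂ - b k' = f x + ((U k' (t - x) - V₂ (t - x) : ℝ) : ℂ) := by
        rw [ha₂, hb, hfdef]; push_cast; ring
      rw [this]
      refine le_trans (norm_add_le _ _) ?_
      have : ‖((U k' (t - x) - V₂ (t - x) : ℝ) : ℂ)‖ ≤ M := by
        rw [Complex.norm_real, Real.norm_eq_abs, abs_sub_comm]
        exact (hM (t - x) htx).2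
      linarith
    have hR : ‖∑ j ∈ (Finset.univ.erase k).erase k', 1 / b j‖ ≤ φbar := by
      refine le_trans (norm_sum_le _ _) (le_trans ?_ (hφ x hxI))
      apply Finset.sum_le_sum
      intro j _
      rw [hb]
      simp [map_div₀]
    have hnorm : ‖D x‖ ≤ (‖f x‖ + M) / yhat ^ 2 + (‖f x‖ + M) / yhat ^ 2 + φbar := by
      rw [hDeq]
      refine le_trans (norm_add_le _ _) ?_
      have := norm_add_le (1 / b k - 1 / a₁) (1 / b k' - 1 / a₂)
      linarith
    have hrw : (‖f x‖ + M) / yhat ^ 2 + (‖f x‖ + M) / yhat ^ 2 + φbar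
        = K * ‖f x‖ + ε := by
      rw [hKdef, hεdef]; ring
    linarith [hrw ▸ hnorm]
  have hf0 : ‖f 0‖ ≤ 0 := by simp [hfdef, hh0, hhU0]
  have hgron := norm_le_gronwallBound_of_norm_deriv_right_le hfc hfd hf0 hbound t htt
  rw [gronwallBound_of_K_ne_0 (ne_of_gt hK0)] at hgron
  simp only [zero_mul, zero_add, sub_zero] at hgron
  -- final elementary estimate
  have hKt : 0 ≤ K * t := by positivity
  have hKtK : K * t ≤ K := by nlinarith
  have he1 : Real.exp (K * t) - 1 ≤ (K * t) * Real.exp (K * t) := by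
    have h2 : Real.exp (-(K * t)) * Real.exp (K * t) = 1 := by
      rw [← Real.exp_add]; simp
    nlinarith [Real.add_one_le_exp (-(K * t)), Real.exp_pos (K * t)]
  have hfinal : ε / K * (Real.exp (K * t) - 1) ≤ ε * Real.exp K := by
    have step1 : ε / K * (Real.exp (K * t) - 1) ≤ ε / K * ((K * t) * Real.exp (K * t)) :=
      mul_le_mul_of_nonneg_left he1 (by positivity)
    have step2 : ε / K * ((K * t) * Real.exp (K * t)) = ε * t * Real.exp (K * t) := by
      field_simp
    have step3 : ε * t * Real.exp (K * t) ≤ ε * Real.exp K := by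
      have hexp : Real.exp (K * t) ≤ Real.exp K := Real.exp_le_exp.2 hKtK
      have h1 : ε * t ≤ ε := by nlinarith
      have h2 : ε * t * Real.exp (K * t) ≤ ε * Real.exp (K * t) :=
        mul_le_mul_of_nonneg_right h1 (Real.exp_pos _).le
      have h3 : ε * Real.exp (K * t) ≤ ε * Real.exp K :=
        mul_le_mul_of_nonneg_left hexp hε0
      linarith
    exact step1.trans (step2.trans_le step3)
  calc ‖h t - hU' t‖ = ‖f t‖ := rfl
  _ ≤ ε / K * (Real.exp (K * t) - 1) := hgron
  _ ≤ ε * Real.exp K := hfinal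
  _ = (2 * M / yhat ^ 2 + φbar) * Real.exp (2 / yhat ^ 2) := by rw [hεdef, hKdef]
end
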